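/- Let F be a closed face of a Choquet simplex X and let x₀ ∈ X \ F. Then there exists a continuous affine function f : X → [0, ∞) with f|_F = 0 and f(x₀) > 0. -/

import Mathlib

noncomputable section

open MeasureTheory

/-- The Baire σ-algebra of a topological space: the σ-algebra generated by the zero sets
of continuous real-valued functions. -/
def baireSigma (Y : Type*) [TopologicalSpace Y] : MeasurableSpace Y :=
  MeasurableSpace.generateFrom {s : Set Y | ∃ f : Y → ℝ, Continuous f ∧ s = f ⁻¹' {0}}

/-- `X` is a Choquet simplex: a compact convex subset of a locally convex space in which
every point is the barycentre of a unique (Baire--Radon) probability measure supported on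
the extreme boundary (i.e. vanishing on every Baire set disjoint from the extreme
points). -/
def IsChoquetSimplex {E : Type*} [AddCommGroup E] [Module ℝ E] [TopologicalSpace E]
    [IsTopologicalAddGroup E] [ContinuousSMul ℝ E] [LocallyConvexSpace ℝ E] [T2Space E]
    (X : Set E) : Prop :=
  IsCompact X ∧ Convex ℝ X ∧
  ∀ x ∈ X,
    letI : MeasurableSpace X := baireSigma X
    ∃! μ : Measure X,
      IsProbabilityMeasure μ ∧
      (∀ ℓ : E →L[ℝ] ℝ, ℓ x = ∫ y : X, ℓ (y : E) ∂μ) ∧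
      (∀ s : Set X, MeasurableSet s →
        Disjoint (Subtype.val '' s) (Set.extremePoints ℝ X) → μ s = 0)

end

noncomputable section ChoquetAuxSection

open MeasureTheory Set Filter Topology

set_option linter.unusedSectionVars false

namespace ChoquetAux

variable {E : Type*} [AddCommGroup E] [Module ℝ E] [TopologicalSpace E]
    [IsTopologicalAddGroup E] [ContinuousSMul ℝ E] [LocallyConvexSpace ℝ E] [T2Space E]

/-- The affine function attached to a continuous linear functional and a constant. -/
def aff (p : (E →L[ℝ] ℝ) × ℝ) (e : E) : ℝ := p.1 e + p.2

lemma aff_continuous (p : (E →L[ℝ] ℝ) × ℝ) : Continuous (aff p) :=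
  p.1.continuous.add continuous_const

lemma aff_combo (p : (E →L[ℝ] ℝ) × ℝ) (y z : E) (t : ℝ) :
    aff p (t • y + (1 - t) • z) = t * aff p y + (1 - t) * aff p z := by
  simp only [aff, map_add, _root_.map_smul, smul_eq_mul]
  ring

/-- The Baire σ-algebra as a (local) instance on subtypes. -/
@[reducible] def bs (X : Set E) : MeasurableSpace ↥X := baireSigma ↥X

attribute [local instance] bs

lemma cont_measurable {X : Set E} {φ : ↥X → ℝ} (hφ : Continuous φ) :
    Measurable φ := by
  have e1 : (inferInstance : MeasurableSpace ℝ)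
      = MeasurableSpace.generateFrom (Set.range Set.Iic) := by
    rw [BorelSpace.measurable_eq (α := ℝ)]
    exact borel_eq_generateFrom_Iic ℝ
  have h2 : @Measurable ↥X ℝ (bs X) (MeasurableSpace.generateFrom (Set.range Set.Iic)) φ := by
    refine measurable_generateFrom ?_
    rintro t ⟨c, rfl⟩
    refine MeasurableSpace.measurableSet_generateFrom ?_
    refine ⟨fun z => max (φ z - c) 0, (hφ.sub continuous_const).max continuous_const, ?_⟩
    ext z
    simp only [Set.mem_preimage, Set.mem_Iic, Set.mem_singleton_iff]
    constructor
    · intro h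
      exact max_eq_right (by linarith)
    · intro h
      have h1 : φ z - c ≤ max (φ z - c) 0 := le_max_left _ _
      rw [h] at h1
      linarith
  intro t ht
  exact h2 (e1 ▸ ht)

lemma cont_integrable {X : Set E} (hXc : IsCompact X) (μ : Measure ↥X) [IsFiniteMeasure μ]
    {φ : ↥X → ℝ} (hφ : Continuous φ) : Integrable φ μ := by
  haveI : CompactSpace ↥X := isCompact_iff_compactSpace.mp hXc
  obtain ⟨C, hC⟩ : ∃ C, ∀ z, ‖φ z‖ ≤ C := by
    rcases isEmpty_or_nonempty ↥X with h | h
    · exact ⟨0, fun z => (IsEmpty.false z).elim⟩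
    · obtain ⟨z₀, -, hz₀⟩ := isCompact_univ.exists_isMaxOn univ_nonempty
        ((continuous_norm.comp hφ).continuousOn)
      exact ⟨‖φ z₀‖, fun z => hz₀ (mem_univ z)⟩
  exact (integrable_const C).mono' (cont_measurable hφ).aestronglyMeasurable
    (Filter.Eventually.of_forall hC)

/-- The conditions a representing (boundary) measure must satisfy. -/
abbrev RepM (X : Set E) (x : E) (μ : Measure ↥X) : Prop :=
  IsProbabilityMeasure μ ∧
  (∀ ℓ : E →L[ℝ] ℝ, ℓ x = ∫ y : X, ℓ (y : E) ∂μ) ∧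
  (∀ s : Set X, MeasurableSet s →
    Disjoint (Subtype.val '' s) (Set.extremePoints ℝ X) → μ s = 0)

lemma integral_aff' {X : Set E} (hXc : IsCompact X) {x : E} {μ : Measure ↥X}
    (hprob : IsProbabilityMeasure μ)
    (hbar : ∀ ℓ : E →L[ℝ] ℝ, ℓ x = ∫ z : X, ℓ (z : E) ∂μ)
    (p : (E →L[ℝ] ℝ) × ℝ) : ∫ z : ↥X, aff p (z : E) ∂μ = aff p x := by
  have hint : Integrable (fun z : ↥X => p.1 (z : E)) μ :=
    cont_integrable hXc μ (p.1.continuous.comp continuous_subtype_val)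
  simp only [aff]
  rw [integral_add hint (integrable_const _), integral_const, ← hbar p.1]
  simp [measure_univ]

lemma RepM.combo {X : Set E} (hXc : IsCompact X) {x₁ x₂ : E} {μ₁ μ₂ : Measure ↥X}
    (h₁ : RepM X x₁ μ₁) (h₂ : RepM X x₂ μ₂) {a b : ℝ} (ha : 0 ≤ a) (hb : 0 ≤ b)
    (hab : a + b = 1) :
    RepM X (a • x₁ + b • x₂) (ENNReal.ofReal a • μ₁ + ENNReal.ofReal b • μ₂) := by
  haveI := h₁.1; haveI := h₂.1
  refine ⟨⟨?_⟩, ?_, ?_⟩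
  · simp only [Measure.add_apply, Measure.smul_apply, measure_univ, smul_eq_mul, mul_one]
    rw [← ENNReal.ofReal_add ha hb, hab, ENNReal.ofReal_one]
  · intro ℓ
    have hint₁ : Integrable (fun z : ↥X => ℓ (z : E)) μ₁ :=
      cont_integrable hXc μ₁ (ℓ.continuous.comp continuous_subtype_val)
    have hint₂ : Integrable (fun z : ↥X => ℓ (z : E)) μ₂ :=
      cont_integrable hXc μ₂ (ℓ.continuous.comp continuous_subtype_val)
    rw [integral_add_measure (hint₁.smul_measure ENNReal.ofReal_ne_top)
        (hint₂.smul_measure ENNReal.ofReal_ne_top),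
      integral_smul_measure, integral_smul_measure, ENNReal.toReal_ofReal ha,
      ENNReal.toReal_ofReal hb, ← h₁.2.1 ℓ, ← h₂.2.1 ℓ, map_add, _root_.map_smul, _root_.map_smul]
  · intro s hs hdisj
    simp only [Measure.add_apply, Measure.smul_apply, h₁.2.2 s hs hdisj, h₂.2.2 s hs hdisj,
      smul_eq_mul, mul_zero, add_zero]

lemma integral_combo {X : Set E} {μ₁ μ₂ : Measure ↥X} {φ : ↥X → ℝ}
    (h₁ : Integrable φ μ₁) (h₂ : Integrable φ μ₂) {a b : ℝ} (ha : 0 ≤ a) (hb : 0 ≤ b) :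
    ∫ z, φ z ∂(ENNReal.ofReal a • μ₁ + ENNReal.ofReal b • μ₂)
      = a * ∫ z, φ z ∂μ₁ + b * ∫ z, φ z ∂μ₂ := by
  rw [integral_add_measure (h₁.smul_measure ENNReal.ofReal_ne_top)
      (h₂.smul_measure ENNReal.ofReal_ne_top),
    integral_smul_measure, integral_smul_measure, ENNReal.toReal_ofReal ha,
    ENNReal.toReal_ofReal hb]
  simp [smul_eq_mul]

/-- Every probability measure on a compact convex set has a barycentre. -/
lemma exists_barycenter {X : Set E} (hXc : IsCompact X) (hXconv : Convex ℝ X)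
    (hXne : X.Nonempty) (ν : Measure ↥X) [IsProbabilityMeasure ν] :
    ∃ w ∈ X, ∀ ℓ : E →L[ℝ] ℝ, ℓ w = ∫ z : ↥X, ℓ (z : E) ∂ν := by
  classical
  have hint : ∀ ℓ : E →L[ℝ] ℝ, Integrable (fun z : ↥X => ℓ (z : E)) ν := fun ℓ =>
    cont_integrable hXc ν (ℓ.continuous.comp continuous_subtype_val)
  set D : Finset (E →L[ℝ] ℝ) → Set E := fun S =>
    X ∩ ⋂ ℓ ∈ S, {e : E | ℓ e = ∫ z : ↥X, ℓ (z : E) ∂ν} with hD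
  have hDclosed : ∀ S, IsClosed (D S) := fun S =>
    (hXc.isClosed).inter (isClosed_biInter fun ℓ _ => isClosed_eq ℓ.continuous continuous_const)
  have hDcompact : ∀ S, IsCompact (D S) := fun S =>
    hXc.inter_right (isClosed_biInter fun ℓ _ => isClosed_eq ℓ.continuous continuous_const)
  have hDne : ∀ S, (D S).Nonempty := by
    intro S
    set T : E →ₗ[ℝ] (↥S → ℝ) := LinearMap.pi fun i => ((i : E →L[ℝ] ℝ) : E →ₗ[ℝ] ℝ) with hT
    have hTcont : Continuous T := continuous_pi fun i => (i : E →L[ℝ] ℝ).continuous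
    have hKc : IsCompact (T '' X) := hXc.image hTcont
    have hKconv : Convex ℝ (T '' X) := hXconv.linear_image T
    set p : ↥S → ℝ := fun i => ∫ z : ↥X, (i : E →L[ℝ] ℝ) (z : E) ∂ν with hp
    have hpK : p ∈ T '' X := by
      by_contra hpno
      obtain ⟨φ, u, hφp, hφK⟩ := geometric_hahn_banach_point_closed hKconv hKc.isClosed hpno
      set c : ↥S → ℝ := fun i => φ (fun j => if i = j then (1 : ℝ) else 0) with hc
      have hφ : ∀ q : ↥S → ℝ, φ q = ∑ i : ↥S, q i * c i := by
        intro q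
        conv_lhs => rw [pi_eq_sum_univ q]
        rw [map_sum]
        refine Finset.sum_congr rfl fun i _ => ?_
        rw [_root_.map_smul, smul_eq_mul]
      have h2 : ∀ z : ↥X, u < ∑ i : ↥S, ((i : E →L[ℝ] ℝ) (z : E)) * c i := by
        intro z
        have := hφK (T (z : E)) ⟨(z : E), z.2, rfl⟩
        rw [hφ] at this
        exact this
      have h3 : u ≤ φ p := by
        rw [hφ]
        have hci : ∀ i : ↥S, Integrable (fun z : ↥X => ((i : E →L[ℝ] ℝ) (z : E)) * c i) ν :=
          fun i => (hint i).mul_const (c i)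
        have h1 : (∑ i : ↥S, p i * c i) = ∫ z : ↥X, (∑ i : ↥S, ((i : E →L[ℝ] ℝ) (z : E)) * c i) ∂ν := by
          rw [integral_finset_sum _ (fun i _ => hci i)]
          refine Finset.sum_congr rfl fun i _ => ?_
          rw [hp]
          rw [← integral_mul_const]
        rw [h1]
        have hconst : (∫ _z : ↥X, u ∂ν) = u := by simp [measure_univ]
        rw [← hconst]
        refine integral_mono (integrable_const u) (integrable_finset_sum _ fun i _ => hci i) ?_
        intro z
        exact (h2 z).le
      linarith
    obtain ⟨w, hwX, hTw⟩ := hpK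
    refine ⟨w, hwX, ?_⟩
    simp only [Set.mem_iInter]
    intro ℓ hℓ
    have := congrFun hTw ⟨ℓ, hℓ⟩
    simpa [hT, hp] using this
  have hdir : Directed (· ⊇ ·) D := by
    intro S T
    refine ⟨S ∪ T, fun e he => ⟨he.1, ?_⟩, fun e he => ⟨he.1, ?_⟩⟩ <;>
    · have h2 := he.2
      simp only [Set.mem_iInter] at h2 ⊢
      intro ℓ hℓ
      first
      | exact h2 ℓ (Finset.mem_union_left _ hℓ)
      | exact h2 ℓ (Finset.mem_union_right _ hℓ)
  haveI : Nonempty (Finset (E →L[ℝ] ℝ)) := ⟨∅⟩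
  obtain ⟨w, hw⟩ := IsCompact.nonempty_iInter_of_directed_nonempty_isCompact_isClosed
    D hdir hDne hDcompact hDclosed
  have hwX : w ∈ X := (Set.mem_iInter.mp hw ∅).1
  refine ⟨w, hwX, fun ℓ => ?_⟩
  have := (Set.mem_iInter.mp hw {ℓ}).2
  simp only [Set.mem_iInter] at this
  exact this ℓ (Finset.mem_singleton_self ℓ)


/-- A midpoint-closed face is closed under arbitrary proper convex combinations. -/
lemma face_mem_left {X F : Set E} (hXconv : Convex ℝ X) (hFclosed : IsClosed F)
    (hFface : ∀ y ∈ X, ∀ z ∈ X, ((1/2 : ℝ) • y + (1/2 : ℝ) • z) ∈ F → y ∈ F ∧ z ∈ F)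
    {y z : E} (hy : y ∈ X) (hz : z ∈ X) {t : ℝ} (ht0 : 0 < t) (ht1 : t ≤ 1)
    (hmem : t • y + (1 - t) • z ∈ F) : y ∈ F := by
  set g : ℝ → E := fun s => s • y + (1 - s) • z with hg
  have hgc : Continuous g := by
    refine Continuous.add ?_ ?_
    · exact continuous_id.smul continuous_const
    · exact (continuous_const.sub continuous_id).smul continuous_const
  have hgX : ∀ s : ℝ, 0 ≤ s → s ≤ 1 → g s ∈ X := fun s h0 h1 =>
    hXconv hy hz h0 (by linarith) (by ring)
  set S : Set ℝ := Set.Icc (0:ℝ) 1 ∩ g ⁻¹' F with hS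
  have hSt : t ∈ S := ⟨⟨ht0.le, ht1⟩, hmem⟩
  have hSclosed : IsClosed S := isClosed_Icc.inter (hFclosed.preimage hgc)
  have hbdd : BddAbove S := ⟨1, fun s hs => hs.1.2⟩
  have hne : S.Nonempty := ⟨t, hSt⟩
  set σ := sSup S with hσ
  have hσS : σ ∈ S := hSclosed.csSup_mem hne hbdd
  have hσt : t ≤ σ := le_csSup hbdd hSt
  have hσ1 : σ = 1 := by
    by_contra hne1
    have hσlt : σ < 1 := lt_of_le_of_ne hσS.1.2 hne1
    set d := min σ (1 - σ) with hd
    have hd0 : 0 < d := lt_min (lt_of_lt_of_le ht0 hσt) (by linarith)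
    have h1 : σ + d ≤ 1 := by have := min_le_right σ (1-σ); linarith
    have h2 : 0 ≤ σ - d := by have := min_le_left σ (1-σ); linarith
    have hpu : g (σ + d) ∈ X := hgX _ (by linarith [hσS.1.1]) h1
    have hpd : g (σ - d) ∈ X := hgX _ h2 (by linarith [hσS.1.2])
    have hmid : (1/2 : ℝ) • g (σ + d) + (1/2 : ℝ) • g (σ - d) ∈ F := by
      have heq : (1/2 : ℝ) • g (σ + d) + (1/2 : ℝ) • g (σ - d) = g σ := by
        simp only [hg]
        module
      rw [heq]
      exact hσS.2
    have hup : σ + d ∈ S :=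
      ⟨⟨by linarith [hσS.1.1], h1⟩, (hFface _ hpu _ hpd hmid).1⟩
    have := le_csSup hbdd hup
    linarith
  have hg1 : g 1 = y := by simp [hg]
  have hmem1 : g σ ∈ F := hσS.2
  rw [hσ1, hg1] at hmem1
  exact hmem1

/-- Any representing measure of a point of the face gives no mass to a superlevel
set of an affine function which is nonpositive on the face. -/
lemma slab_null {X F : Set E} (hXc : IsCompact X) (hXconv : Convex ℝ X) (hFX : F ⊆ X)
    (hFclosed : IsClosed F)
    (hFface : ∀ y ∈ X, ∀ z ∈ X, ((1/2 : ℝ) • y + (1/2 : ℝ) • z) ∈ F → y ∈ F ∧ z ∈ F)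
    {y : E} (hy : y ∈ F) {μ : Measure ↥X}
    (hprob : IsProbabilityMeasure μ)
    (hbar : ∀ ℓ : E →L[ℝ] ℝ, ℓ y = ∫ z : X, ℓ (z : E) ∂μ)
    (g : (E →L[ℝ] ℝ) × ℝ) (hgF : ∀ e ∈ F, aff g e ≤ 0) {ε : ℝ} (hε : 0 < ε) :
    μ {z : ↥X | ε ≤ aff g (z : E)} = 0 := by
  haveI := hprob
  set s : Set ↥X := {z | ε ≤ aff g (z : E)} with hsdef
  have hgc : Continuous fun z : ↥X => aff g (z : E) :=
    (aff_continuous g).comp continuous_subtype_val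
  have hs : MeasurableSet s := measurableSet_le measurable_const (cont_measurable hgc)
  have hintg : Integrable (fun z : ↥X => aff g (z : E)) μ := cont_integrable hXc μ hgc
  by_contra hne0
  rcases eq_or_ne (μ sᶜ) 0 with hcz | hcn
  · -- the measure lives on s, so the barycentre value is ≥ ε, contradiction
    have hae : ∀ᵐ (z : ↥X) ∂μ, ε ≤ aff g (z : E) := by
      rw [ae_iff]
      have heqs : {z : ↥X | ¬ ε ≤ aff g (z : E)} = sᶜ := by
        ext z; simp [hsdef]
      rw [heqs]
      exact hcz
    have hle : ε ≤ ∫ z : ↥X, aff g (z : E) ∂μ := by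
      have hconst : (∫ _z : ↥X, ε ∂μ) = ε := by simp [measure_univ]
      rw [← hconst]
      exact integral_mono_ae (integrable_const ε) hintg hae
    rw [integral_aff' hXc hprob hbar] at hle
    have := hgF y hy
    linarith
  · -- proper decomposition
    have hμs_fin : μ s ≠ ⊤ := measure_ne_top μ s
    have hμc_fin : μ sᶜ ≠ ⊤ := measure_ne_top μ sᶜ
    have hadd : μ s + μ sᶜ = 1 := by
      rw [measure_add_measure_compl hs, measure_univ]
    set α := (μ s).toReal with hα
    set β := (μ sᶜ).toReal with hβ
    have hαβ : α + β = 1 := by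
      have := congrArg ENNReal.toReal hadd
      rwa [ENNReal.toReal_add hμs_fin hμc_fin, ENNReal.toReal_one] at this
    have hα0 : 0 < α := ENNReal.toReal_pos hne0 hμs_fin
    have hβ0 : 0 < β := ENNReal.toReal_pos hcn hμc_fin
    have hα1 : α < 1 := by linarith
    set ν₁ : Measure ↥X := (μ s)⁻¹ • μ.restrict s with hν₁
    set ν₂ : Measure ↥X := (μ sᶜ)⁻¹ • μ.restrict sᶜ with hν₂
    haveI hp₁ : IsProbabilityMeasure ν₁ := by
      constructor
      rw [hν₁, Measure.smul_apply, Measure.restrict_apply_univ, smul_eq_mul]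
      exact ENNReal.inv_mul_cancel hne0 hμs_fin
    haveI hp₂ : IsProbabilityMeasure ν₂ := by
      constructor
      rw [hν₂, Measure.smul_apply, Measure.restrict_apply_univ, smul_eq_mul]
      exact ENNReal.inv_mul_cancel hcn hμc_fin
    have hXne : X.Nonempty := ⟨y, hFX hy⟩
    obtain ⟨b₁, hb₁X, hb₁⟩ := exists_barycenter hXc hXconv hXne ν₁
    obtain ⟨b₂, hb₂X, hb₂⟩ := exists_barycenter hXc hXconv hXne ν₂
    -- integral splitting
    have hsplit : ∀ {φ : ↥X → ℝ}, Continuous φ →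
        ∫ z : ↥X, φ z ∂μ = α * ∫ z : ↥X, φ z ∂ν₁ + β * ∫ z : ↥X, φ z ∂ν₂ := by
      intro φ hφ
      have hint : Integrable φ μ := cont_integrable hXc μ hφ
      have e₁ : ∫ z : ↥X, φ z ∂ν₁ = (μ s)⁻¹.toReal * ∫ z : ↥X, φ z ∂(μ.restrict s) := by
        rw [hν₁, integral_smul_measure, smul_eq_mul]
      have e₂ : ∫ z : ↥X, φ z ∂ν₂ = (μ sᶜ)⁻¹.toReal * ∫ z : ↥X, φ z ∂(μ.restrict sᶜ) := by
        rw [hν₂, integral_smul_measure, smul_eq_mul]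
      rw [e₁, e₂, ENNReal.toReal_inv, ENNReal.toReal_inv, ← hα, ← hβ]
      rw [← integral_add_compl hs hint]
      field_simp
    have hbary : ∀ ℓ : E →L[ℝ] ℝ, ℓ y = α * ℓ b₁ + β * ℓ b₂ := by
      intro ℓ
      have hφc : Continuous fun z : ↥X => ℓ (z : E) := ℓ.continuous.comp continuous_subtype_val
      rw [hbar ℓ, hsplit hφc, ← hb₁ ℓ, ← hb₂ ℓ]
    have hyeq : y = α • b₁ + (1 - α) • b₂ := by
      by_contra hney
      obtain ⟨ℓ, hℓ⟩ := geometric_hahn_banach_point_point hney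
      have h1 := hbary ℓ
      rw [map_add, _root_.map_smul, _root_.map_smul, smul_eq_mul, smul_eq_mul] at hℓ
      have hβeq : (1 - α) = β := by linarith
      rw [hβeq] at hℓ
      linarith
    have hb₁F : b₁ ∈ F :=
      face_mem_left hXconv hFclosed hFface hb₁X hb₂X hα0 hα1.le (hyeq ▸ hy)
    -- but aff g b₁ ≥ ε
    have hεb : ε ≤ aff g b₁ := by
      have haeb : ∀ᵐ (z : ↥X) ∂ν₁, ε ≤ aff g (z : E) := by
        rw [hν₁]
        exact Measure.ae_smul_measure ((ae_restrict_mem hs).mono fun z hz => hz) _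
      have := integral_mono_ae (integrable_const ε) (cont_integrable hXc ν₁ hgc) haeb
      rw [integral_aff' hXc hp₁ hb₁ g] at this
      simpa [measure_univ] using this
    have := hgF b₁ hb₁F
    linarith

/-- Integral form of the slab lemma. -/
lemma slab_integral {X F : Set E} (hXc : IsCompact X) (hXconv : Convex ℝ X) (hFX : F ⊆ X)
    (hFclosed : IsClosed F)
    (hFface : ∀ y ∈ X, ∀ z ∈ X, ((1/2 : ℝ) • y + (1/2 : ℝ) • z) ∈ F → y ∈ F ∧ z ∈ F)
    {y : E} (hy : y ∈ F) {μ : Measure ↥X}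
    (hprob : IsProbabilityMeasure μ)
    (hbar : ∀ ℓ : E →L[ℝ] ℝ, ℓ y = ∫ z : X, ℓ (z : E) ∂μ)
    (g : (E →L[ℝ] ℝ) × ℝ) (hgF : ∀ e ∈ F, aff g e ≤ 0) :
    ∫ z : ↥X, max (aff g (z : E)) 0 ∂μ ≤ 0 := by
  haveI := hprob
  have hgc : Continuous fun z : ↥X => max (aff g (z : E)) 0 :=
    ((aff_continuous g).comp continuous_subtype_val).max continuous_const
  refine le_of_forall_pos_le_add ?_
  intro ε hε
  rw [zero_add]
  have hnull := slab_null hXc hXconv hFX hFclosed hFface hy hprob hbar g hgF hε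
  have hae : ∀ᵐ (z : ↥X) ∂μ, max (aff g (z : E)) 0 ≤ ε := by
    rw [ae_iff]
    refine measure_mono_null ?_ hnull
    intro z hz
    simp only [Set.mem_setOf_eq, not_le] at hz
    simp only [Set.mem_setOf_eq]
    rcases le_or_gt (aff g (z : E)) 0 with h | h
    · exfalso; rw [max_eq_right h] at hz; linarith
    · rw [max_eq_left h.le] at hz; linarith
  have := integral_mono_ae (cont_integrable hXc μ hgc) (integrable_const ε) hae
  simpa [measure_univ] using this


section JoinHelpers

variable {V : Type*} [AddCommGroup V] [Module ℝ V] [TopologicalSpace V]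
    [IsTopologicalAddGroup V] [ContinuousSMul ℝ V]

lemma isCompact_convexJoin {s t : Set V} (hs : IsCompact s) (ht : IsCompact t) :
    IsCompact (convexJoin ℝ s t) := by
  have heq : convexJoin ℝ s t
      = (fun q : ℝ × V × V => (1 - q.1) • q.2.1 + q.1 • q.2.2) ''
        (Set.Icc (0:ℝ) 1 ×ˢ s ×ˢ t) := by
    ext x
    rw [mem_convexJoin]
    constructor
    · rintro ⟨a, ha, b, hb, hseg⟩
      rw [segment_eq_image] at hseg
      obtain ⟨θ, hθ, rfl⟩ := hseg
      exact ⟨(θ, a, b), ⟨hθ, ha, hb⟩, rfl⟩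
    · rintro ⟨⟨θ, a, b⟩, ⟨hθ, ha, hb⟩, rfl⟩
      refine ⟨a, ha, b, hb, ?_⟩
      rw [segment_eq_image]
      exact ⟨θ, hθ, rfl⟩
  rw [heq]
  refine (isCompact_Icc.prod (hs.prod ht)).image ?_
  refine Continuous.add ?_ ?_
  · exact (continuous_const.sub continuous_fst).smul (continuous_fst.comp continuous_snd)
  · exact continuous_fst.smul (continuous_snd.comp continuous_snd)

end JoinHelpers

/-- Graph of an affine function over a subset. -/
def Gr (p : (E →L[ℝ] ℝ) × ℝ) (S : Set E) : Set (E × ℝ) := (fun e => (e, aff p e)) '' S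

lemma aff_combo' (p : (E →L[ℝ] ℝ) × ℝ) (x y : E) {a b : ℝ} (hab : a + b = 1) :
    aff p (a • x + b • y) = a * aff p x + b * aff p y := by
  have hb : b = 1 - a := by linarith
  subst hb
  simp only [aff, map_add, _root_.map_smul, smul_eq_mul]
  ring

lemma gr_compact (p : (E →L[ℝ] ℝ) × ℝ) {S : Set E} (hS : IsCompact S) :
    IsCompact (Gr p S) :=
  hS.image (continuous_id.prodMk (aff_continuous p))

lemma gr_convex (p : (E →L[ℝ] ℝ) × ℝ) {S : Set E} (hS : Convex ℝ S) :
    Convex ℝ (Gr p S) := by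
  rintro q₁ ⟨e₁, he₁, rfl⟩ q₂ ⟨e₂, he₂, rfl⟩ a b ha hb hab
  refine ⟨a • e₁ + b • e₂, hS he₁ he₂ ha hb hab, ?_⟩
  simp only [Prod.smul_mk, Prod.mk_add_mk, smul_eq_mul]
  exact Prod.ext rfl (aff_combo' p e₁ e₂ hab)

lemma gr_nonempty (p : (E →L[ℝ] ℝ) × ℝ) {S : Set E} (hS : S.Nonempty) :
    (Gr p S).Nonempty := hS.image _

lemma integrable_comboM {X : Set E} {μ₁ μ₂ : Measure ↥X} {φ : ↥X → ℝ}
    (h₁ : Integrable φ μ₁) (h₂ : Integrable φ μ₂) (a b : ℝ) :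
    Integrable φ (ENNReal.ofReal a • μ₁ + ENNReal.ofReal b • μ₂) :=
  (h₁.smul_measure ENNReal.ofReal_ne_top).add_measure (h₂.smul_measure ENNReal.ofReal_ne_top)


end ChoquetAux

end ChoquetAuxSection


noncomputable section ChoquetTailSection

open MeasureTheory Set Filter Topology

set_option linter.unusedSectionVars false

namespace ChoquetAux

variable {E : Type*} [AddCommGroup E] [Module ℝ E] [TopologicalSpace E]
    [IsTopologicalAddGroup E] [ContinuousSMul ℝ E] [LocallyConvexSpace ℝ E] [T2Space E]

attribute [local instance] bs

/-- The approximate separation step (Edwards-type), using the simplex structure. -/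
lemma approx_sep {X F : Set E}
    (hXc : IsCompact X) (hXconv : Convex ℝ X) (hXne : X.Nonempty)
    (hFX : F ⊆ X) (hFclosed : IsClosed F) (hFconvex : Convex ℝ F) (hFne : F.Nonempty)
    (hFface : ∀ y ∈ X, ∀ z ∈ X, ((1/2 : ℝ) • y + (1/2 : ℝ) • z) ∈ F → y ∈ F ∧ z ∈ F)
    (hex : ∀ x ∈ X, ∃ μ : Measure ↥X, RepM X x μ)
    (huni : ∀ x ∈ X, ∀ μ₁ μ₂ : Measure ↥X, RepM X x μ₁ → RepM X x μ₂ → μ₁ = μ₂)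
    (g₁ g₂ g₃ u₁ u₂ : (E →L[ℝ] ℝ) × ℝ)
    (hgF : ∀ e ∈ F, aff g₁ e ≤ 0 ∧ aff g₂ e ≤ 0 ∧ aff g₃ e ≤ 0)
    (hgu : ∀ e ∈ X,
      (aff g₁ e ≤ aff u₁ e ∧ aff g₁ e ≤ aff u₂ e) ∧
      (aff g₂ e ≤ aff u₁ e ∧ aff g₂ e ≤ aff u₂ e) ∧
      (aff g₃ e ≤ aff u₁ e ∧ aff g₃ e ≤ aff u₂ e))
    {δ : ℝ} (hδ : 0 < δ) :
    ∃ a : (E →L[ℝ] ℝ) × ℝ,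
      (∀ e ∈ X, aff g₁ e - δ ≤ aff a e ∧ aff g₂ e - δ ≤ aff a e ∧ aff g₃ e - δ ≤ aff a e) ∧
      (∀ e ∈ X, aff a e ≤ aff u₁ e + δ ∧ aff a e ≤ aff u₂ e + δ) ∧
      (∀ e ∈ F, aff a e ≤ δ) := by
  classical
  choose m hm using hex
  have hFc : IsCompact F := IsCompact.of_isClosed_subset hXc hFclosed hFX
  set z0 : (E →L[ℝ] ℝ) × ℝ := (0, 0) with hz0def
  have haffz0 : ∀ e : E, aff z0 e = 0 := by
    intro e; simp [aff, hz0def]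
  set J₁ : Set (E × ℝ) := convexJoin ℝ (Gr g₁ X) (convexJoin ℝ (Gr g₂ X) (Gr g₃ X)) with hJ₁def
  set J₂ : Set (E × ℝ) := convexJoin ℝ (Gr z0 F) (convexJoin ℝ (Gr u₁ X) (Gr u₂ X)) with hJ₂def
  set K₁ : Set (E × ℝ) := (fun q => q + ((0 : E), -δ)) '' J₁ with hK₁def
  set K₂ : Set (E × ℝ) := (fun q => q + ((0 : E), δ)) '' J₂ with hK₂def
  have hJ₁c : IsCompact J₁ :=
    isCompact_convexJoin (gr_compact _ hXc)
      (isCompact_convexJoin (gr_compact _ hXc) (gr_compact _ hXc))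
  have hJ₂c : IsCompact J₂ :=
    isCompact_convexJoin (gr_compact _ hFc)
      (isCompact_convexJoin (gr_compact _ hXc) (gr_compact _ hXc))
  have hJ₁conv : Convex ℝ J₁ :=
    (gr_convex _ hXconv).convexJoin ((gr_convex _ hXconv).convexJoin (gr_convex _ hXconv))
  have hJ₂conv : Convex ℝ J₂ :=
    (gr_convex _ hFconvex).convexJoin ((gr_convex _ hXconv).convexJoin (gr_convex _ hXconv))
  have htransl : ∀ (c : E × ℝ) (S : Set (E × ℝ)),
      (fun q => q + c) '' S = (fun q => c + q) '' S := by
    intro c S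
    simp only [add_comm]
  have hK₁c : IsCompact K₁ := hJ₁c.image (continuous_add_right _)
  have hK₂c : IsCompact K₂ := hJ₂c.image (continuous_add_right _)
  have hK₁conv : Convex ℝ K₁ := by rw [hK₁def, htransl]; exact hJ₁conv.translate _
  have hK₂conv : Convex ℝ K₂ := by rw [hK₂def, htransl]; exact hJ₂conv.translate _
  -- the key disjointness, via uniqueness of representing measures
  have hdisj : Disjoint K₁ K₂ := by
    rw [Set.disjoint_left]
    rintro q hq₁ hq₂
    obtain ⟨q₁, hq₁J, rfl⟩ := hq₁
    obtain ⟨q₂, hq₂J, heq⟩ := hq₂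
    obtain ⟨P₁, hP₁, R, hR, hseg₁⟩ := mem_convexJoin.mp hq₁J
    obtain ⟨a, b, ha, hb, hab, hq₁eq⟩ := hseg₁
    obtain ⟨P₂, hP₂, P₃, hP₃, hseg₂⟩ := mem_convexJoin.mp hR
    obtain ⟨a', b', ha', hb', hab', hReq⟩ := hseg₂
    obtain ⟨w₁, hw₁, rfl⟩ := hP₁
    obtain ⟨w₂, hw₂, rfl⟩ := hP₂
    obtain ⟨w₃, hw₃, rfl⟩ := hP₃
    obtain ⟨Q₁, hQ₁, R', hR', hseg₁'⟩ := mem_convexJoin.mp hq₂J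
    obtain ⟨c, d, hc, hd, hcd, hq₂eq⟩ := hseg₁'
    obtain ⟨Q₂, hQ₂, Q₃, hQ₃, hseg₂'⟩ := mem_convexJoin.mp hR'
    obtain ⟨c', d', hc', hd', hcd', hR'eq⟩ := hseg₂'
    obtain ⟨ys, hys, rfl⟩ := hQ₁
    obtain ⟨v₁, hv₁, rfl⟩ := hQ₂
    obtain ⟨v₂, hv₂, rfl⟩ := hQ₃
    subst hReq
    subst hR'eq
    subst hq₁eq
    subst hq₂eq
    simp only [Prod.smul_mk, Prod.mk_add_mk, smul_eq_mul, Prod.mk.injEq, haffz0, mul_zero,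
      add_zero, zero_add] at heq
    obtain ⟨hx_eq, hr_eq⟩ := heq
    -- build the two representing measures of the common barycentre
    have hinnerA : a' • w₂ + b' • w₃ ∈ X := hXconv hw₂ hw₃ ha' hb' hab'
    have hxA : a • w₁ + b • (a' • w₂ + b' • w₃) ∈ X := hXconv hw₁ hinnerA ha hb hab
    have hinnerB : c' • v₁ + d' • v₂ ∈ X := hXconv hv₁ hv₂ hc' hd' hcd'
    have hxB : c • ys + d • (c' • v₁ + d' • v₂) ∈ X := hXconv (hFX hys) hinnerB hc hd hcd
    have hA : RepM X (a • w₁ + b • (a' • w₂ + b' • w₃))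
        (ENNReal.ofReal a • m w₁ hw₁ +
          ENNReal.ofReal b • (ENNReal.ofReal a' • m w₂ hw₂ + ENNReal.ofReal b' • m w₃ hw₃)) :=
      RepM.combo hXc (hm w₁ hw₁)
        (RepM.combo hXc (hm w₂ hw₂) (hm w₃ hw₃) ha' hb' hab') ha hb hab
    have hB : RepM X (c • ys + d • (c' • v₁ + d' • v₂))
        (ENNReal.ofReal c • m ys (hFX hys) +
          ENNReal.ofReal d • (ENNReal.ofReal c' • m v₁ hv₁ + ENNReal.ofReal d' • m v₂ hv₂)) :=
      RepM.combo hXc (hm ys (hFX hys))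
        (RepM.combo hXc (hm v₁ hv₁) (hm v₂ hv₂) hc' hd' hcd') hc hd hcd
    have hB' : RepM X (a • w₁ + b • (a' • w₂ + b' • w₃))
        (ENNReal.ofReal c • m ys (hFX hys) +
          ENNReal.ofReal d • (ENNReal.ofReal c' • m v₁ hv₁ + ENNReal.ofReal d' • m v₂ hv₂)) := by
      rwa [hx_eq] at hB
    have hμeq := huni _ hxA _ _ hA hB'
    -- the integrand
    set φ : ↥X → ℝ :=
      fun w => max (max (aff g₁ (w : E)) (aff g₂ (w : E))) (aff g₃ (w : E)) with hφdef
    have hφc : Continuous φ := by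
      refine Continuous.max (Continuous.max ?_ ?_) ?_ <;>
        exact (aff_continuous _).comp continuous_subtype_val
    have hφint : ∀ (w : E) (hw : w ∈ X), Integrable φ (m w hw) := by
      intro w hw
      haveI := (hm w hw).1
      exact cont_integrable hXc _ hφc
    have hgint : ∀ (p : (E →L[ℝ] ℝ) × ℝ) (w : E) (hw : w ∈ X),
        Integrable (fun u : ↥X => aff p (u : E)) (m w hw) := by
      intro p w hw
      haveI := (hm w hw).1
      exact cont_integrable hXc _ ((aff_continuous p).comp continuous_subtype_val)
    have hintaff : ∀ (p : (E →L[ℝ] ℝ) × ℝ) (w : E) (hw : w ∈ X),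
        ∫ u : ↥X, aff p (u : E) ∂(m w hw) = aff p w := fun p w hw =>
      integral_aff' hXc (hm w hw).1 (hm w hw).2.1 p
    -- lower bound on ∫ φ dνA
    have hlowA : ∀ (i : (E →L[ℝ] ℝ) × ℝ) (w : E) (hw : w ∈ X),
        (∀ u : ↥X, aff i (u : E) ≤ φ u) → aff i w ≤ ∫ u : ↥X, φ u ∂(m w hw) := by
      intro i w hw hle
      rw [← hintaff i w hw]
      exact integral_mono (hgint i w hw) (hφint w hw) hle
    have hφ₁ : ∀ u : ↥X, aff g₁ (u : E) ≤ φ u := fun u =>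
      le_max_of_le_left (le_max_left _ _)
    have hφ₂ : ∀ u : ↥X, aff g₂ (u : E) ≤ φ u := fun u =>
      le_max_of_le_left (le_max_right _ _)
    have hφ₃ : ∀ u : ↥X, aff g₃ (u : E) ≤ φ u := fun u => le_max_right _ _
    have hIA : a * aff g₁ w₁ + b * (a' * aff g₂ w₂ + b' * aff g₃ w₃)
        ≤ ∫ u : ↥X, φ u ∂(ENNReal.ofReal a • m w₁ hw₁ +
          ENNReal.ofReal b • (ENNReal.ofReal a' • m w₂ hw₂ + ENNReal.ofReal b' • m w₃ hw₃)) := by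
      rw [integral_combo (hφint w₁ hw₁)
        (integrable_comboM (hφint w₂ hw₂) (hφint w₃ hw₃) a' b') ha hb,
        integral_combo (hφint w₂ hw₂) (hφint w₃ hw₃) ha' hb']
      have l₁ := hlowA g₁ w₁ hw₁ hφ₁
      have l₂ := hlowA g₂ w₂ hw₂ hφ₂
      have l₃ := hlowA g₃ w₃ hw₃ hφ₃
      have := mul_le_mul_of_nonneg_left l₁ ha
      have h23 : a' * aff g₂ w₂ + b' * aff g₃ w₃
          ≤ a' * ∫ u : ↥X, φ u ∂(m w₂ hw₂) + b' * ∫ u : ↥X, φ u ∂(m w₃ hw₃) :=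
        add_le_add (mul_le_mul_of_nonneg_left l₂ ha') (mul_le_mul_of_nonneg_left l₃ hb')
      have := mul_le_mul_of_nonneg_left h23 hb
      linarith [mul_le_mul_of_nonneg_left l₁ ha]
    -- upper bound on ∫ φ dνB
    have hupys : ∫ u : ↥X, φ u ∂(m ys (hFX hys)) ≤ 0 := by
      haveI := (hm ys (hFX hys)).1
      have hg1 : ∀ e ∈ F, aff g₁ e ≤ 0 := fun e he => (hgF e he).1
      have hg2 : ∀ e ∈ F, aff g₂ e ≤ 0 := fun e he => (hgF e he).2.1
      have hg3 : ∀ e ∈ F, aff g₃ e ≤ 0 := fun e he => (hgF e he).2.2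
      have s₁ := slab_integral hXc hXconv hFX hFclosed hFface hys
        (hm ys (hFX hys)).1 (hm ys (hFX hys)).2.1 g₁ hg1
      have s₂ := slab_integral hXc hXconv hFX hFclosed hFface hys
        (hm ys (hFX hys)).1 (hm ys (hFX hys)).2.1 g₂ hg2
      have s₃ := slab_integral hXc hXconv hFX hFclosed hFface hys
        (hm ys (hFX hys)).1 (hm ys (hFX hys)).2.1 g₃ hg3
      have hptwise : ∀ u : ↥X, φ u ≤ max (aff g₁ (u : E)) 0 + max (aff g₂ (u : E)) 0
          + max (aff g₃ (u : E)) 0 := by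
        intro u
        have m1 : aff g₁ (u : E) ≤ max (aff g₁ (u : E)) 0 := le_max_left _ _
        have m2 : aff g₂ (u : E) ≤ max (aff g₂ (u : E)) 0 := le_max_left _ _
        have m3 : aff g₃ (u : E) ≤ max (aff g₃ (u : E)) 0 := le_max_left _ _
        have n1 : (0:ℝ) ≤ max (aff g₁ (u : E)) 0 := le_max_right _ _
        have n2 : (0:ℝ) ≤ max (aff g₂ (u : E)) 0 := le_max_right _ _
        have n3 : (0:ℝ) ≤ max (aff g₃ (u : E)) 0 := le_max_right _ _
        refine max_le (max_le ?_ ?_) ?_ <;> linarith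
      have hmaxint : ∀ (p : (E →L[ℝ] ℝ) × ℝ),
          Integrable (fun u : ↥X => max (aff p (u : E)) 0) (m ys (hFX hys)) := by
        intro p
        exact cont_integrable hXc _
          (((aff_continuous p).comp continuous_subtype_val).max continuous_const)
      have h12 : Integrable (fun u : ↥X => max (aff g₁ (u : E)) 0
          + max (aff g₂ (u : E)) 0) (m ys (hFX hys)) := (hmaxint g₁).add (hmaxint g₂)
      have h123 : Integrable (fun u : ↥X => max (aff g₁ (u : E)) 0 + max (aff g₂ (u : E)) 0
          + max (aff g₃ (u : E)) 0) (m ys (hFX hys)) := h12.add (hmaxint g₃)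
      have hmono := integral_mono (hφint ys (hFX hys)) h123 hptwise
      have hsplit2 : (∫ u : ↥X, (max (aff g₁ (u : E)) 0 + max (aff g₂ (u : E)) 0
            + max (aff g₃ (u : E)) 0) ∂(m ys (hFX hys)))
          = (∫ u : ↥X, max (aff g₁ (u : E)) 0 ∂(m ys (hFX hys)))
            + (∫ u : ↥X, max (aff g₂ (u : E)) 0 ∂(m ys (hFX hys)))
            + (∫ u : ↥X, max (aff g₃ (u : E)) 0 ∂(m ys (hFX hys))) := by
        rw [integral_add h12 (hmaxint g₃), integral_add (hmaxint g₁) (hmaxint g₂)]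
      rw [hsplit2] at hmono
      linarith
    have hupv : ∀ (uj : (E →L[ℝ] ℝ) × ℝ) (w : E) (hw : w ∈ X),
        (∀ u : ↥X, φ u ≤ aff uj (u : E)) → ∫ u : ↥X, φ u ∂(m w hw) ≤ aff uj w := by
      intro uj w hw hle
      rw [← hintaff uj w hw]
      exact integral_mono (hφint w hw) (hgint uj w hw) hle
    have hφu₁ : ∀ u : ↥X, φ u ≤ aff u₁ (u : E) := by
      intro u
      have h := hgu (u : E) u.2
      exact max_le (max_le h.1.1 h.2.1.1) h.2.2.1
    have hφu₂ : ∀ u : ↥X, φ u ≤ aff u₂ (u : E) := by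
      intro u
      have h := hgu (u : E) u.2
      exact max_le (max_le h.1.2 h.2.1.2) h.2.2.2
    have hIB : ∫ u : ↥X, φ u ∂(ENNReal.ofReal c • m ys (hFX hys) +
          ENNReal.ofReal d • (ENNReal.ofReal c' • m v₁ hv₁ + ENNReal.ofReal d' • m v₂ hv₂))
        ≤ d * (c' * aff u₁ v₁ + d' * aff u₂ v₂) := by
      rw [integral_combo (hφint ys (hFX hys))
        (integrable_comboM (hφint v₁ hv₁) (hφint v₂ hv₂) c' d') hc hd,
        integral_combo (hφint v₁ hv₁) (hφint v₂ hv₂) hc' hd']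
      have l₁ := hupv u₁ v₁ hv₁ hφu₁
      have l₂ := hupv u₂ v₂ hv₂ hφu₂
      have h23 : c' * ∫ u : ↥X, φ u ∂(m v₁ hv₁) + d' * ∫ u : ↥X, φ u ∂(m v₂ hv₂)
          ≤ c' * aff u₁ v₁ + d' * aff u₂ v₂ :=
        add_le_add (mul_le_mul_of_nonneg_left l₁ hc') (mul_le_mul_of_nonneg_left l₂ hd')
      have := mul_le_mul_of_nonneg_left h23 hd
      have := mul_le_mul_of_nonneg_left hupys hc
      linarith
    rw [hμeq] at hIA
    -- contradiction with the coordinate equation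
    linarith
  -- separation
  obtain ⟨Λ, r₁, r₂, hΛ₁, hr, hΛ₂⟩ :=
    geometric_hahn_banach_compact_closed hK₁conv hK₁c hK₂conv hK₂c.isClosed hdisj
  set γ : ℝ := Λ ((0 : E), (1 : ℝ)) with hγdef
  have hΛeq : ∀ (e : E) (r : ℝ), Λ (e, r) = Λ (e, 0) + r * γ := by
    intro e r
    have h1 : (e, r) = (e, (0:ℝ)) + r • ((0:E), (1:ℝ)) := by
      simp [Prod.smul_mk]
    rw [h1, map_add, _root_.map_smul, smul_eq_mul]
  have hGrne : ∀ p : (E →L[ℝ] ℝ) × ℝ, (Gr p X).Nonempty := fun p => gr_nonempty p hXne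
  have hJ23ne : (convexJoin ℝ (Gr g₂ X) (Gr g₃ X)).Nonempty :=
    (hGrne g₂).mono (subset_convexJoin_left (hGrne g₃))
  have hJu12ne : (convexJoin ℝ (Gr u₁ X) (Gr u₂ X)).Nonempty :=
    (hGrne u₁).mono (subset_convexJoin_left (hGrne u₂))
  have hK₁mem₁ : ∀ e ∈ X, (e, aff g₁ e - δ) ∈ K₁ := by
    intro e he
    refine ⟨(e, aff g₁ e), subset_convexJoin_left hJ23ne ⟨e, he, rfl⟩, ?_⟩
    simp [Prod.mk_add_mk, sub_eq_add_neg]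
  have hK₁mem₂ : ∀ e ∈ X, (e, aff g₂ e - δ) ∈ K₁ := by
    intro e he
    refine ⟨(e, aff g₂ e), subset_convexJoin_right (hGrne g₁)
      (subset_convexJoin_left (hGrne g₃) ⟨e, he, rfl⟩), ?_⟩
    simp [Prod.mk_add_mk, sub_eq_add_neg]
  have hK₁mem₃ : ∀ e ∈ X, (e, aff g₃ e - δ) ∈ K₁ := by
    intro e he
    refine ⟨(e, aff g₃ e), subset_convexJoin_right (hGrne g₁)
      (subset_convexJoin_right (hGrne g₂) ⟨e, he, rfl⟩), ?_⟩
    simp [Prod.mk_add_mk, sub_eq_add_neg]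
  have hK₂memF : ∀ e ∈ F, (e, δ) ∈ K₂ := by
    intro e he
    refine ⟨(e, 0), subset_convexJoin_left hJu12ne ⟨e, he, Prod.ext rfl (haffz0 e)⟩, ?_⟩
    simp [Prod.mk_add_mk]
  have hK₂mem₁ : ∀ e ∈ X, (e, aff u₁ e + δ) ∈ K₂ := by
    intro e he
    exact ⟨(e, aff u₁ e), subset_convexJoin_right (gr_nonempty z0 hFne)
      (subset_convexJoin_left (hGrne u₂) ⟨e, he, rfl⟩), by simp [Prod.mk_add_mk]⟩
  have hK₂mem₂ : ∀ e ∈ X, (e, aff u₂ e + δ) ∈ K₂ := by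
    intro e he
    exact ⟨(e, aff u₂ e), subset_convexJoin_right (gr_nonempty z0 hFne)
      (subset_convexJoin_right (hGrne u₁) ⟨e, he, rfl⟩), by simp [Prod.mk_add_mk]⟩
  -- the vertical coefficient is positive
  obtain ⟨xs, hxs⟩ := hFne
  have hxsX : xs ∈ X := hFX hxs
  have h1 := hΛ₁ _ (hK₁mem₁ xs hxsX)
  have h2 := hΛ₂ _ (hK₂memF xs hxs)
  rw [hΛeq] at h1 h2
  have hγpos : 0 < γ := by
    by_contra hh
    push_neg at hh
    have hg1xs : aff g₁ xs ≤ 0 := (hgF xs hxs).1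
    nlinarith [mul_nonneg (neg_nonneg.mpr hh) (by linarith : (0:ℝ) ≤ 2*δ - aff g₁ xs)]
  -- the affine functional
  have hγ0 : γ ≠ 0 := ne_of_gt hγpos
  set ℓA : E →L[ℝ] ℝ := Λ.comp (ContinuousLinearMap.inl ℝ E ℝ) with hℓA
  have hℓAe : ∀ e : E, ℓA e = Λ (e, 0) := by
    intro e
    rw [hℓA]
    simp
  set aP : (E →L[ℝ] ℝ) × ℝ := (-(γ⁻¹) • ℓA, r₁ / γ) with haP
  have haffa : ∀ e : E, aff aP e = (r₁ - Λ (e, 0)) / γ := by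
    intro e
    simp only [haP, aff, ContinuousLinearMap.coe_smul', Pi.smul_apply, smul_eq_mul, hℓAe]
    field_simp
    ring
  refine ⟨aP, ?_, ?_, ?_⟩
  · intro e he
    have k₁ := hΛ₁ _ (hK₁mem₁ e he)
    have k₂ := hΛ₁ _ (hK₁mem₂ e he)
    have k₃ := hΛ₁ _ (hK₁mem₃ e he)
    rw [hΛeq] at k₁ k₂ k₃
    refine ⟨?_, ?_, ?_⟩ <;>
      · rw [haffa e, le_div_iff₀ hγpos]
        linarith
  · intro e he
    have k₁ := hΛ₂ _ (hK₂mem₁ e he)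
    have k₂ := hΛ₂ _ (hK₂mem₂ e he)
    rw [hΛeq] at k₁ k₂
    constructor <;>
      · rw [haffa e, div_le_iff₀ hγpos]
        linarith
  · intro e he
    have k := hΛ₂ _ (hK₂memF e he)
    rw [hΛeq] at k
    rw [haffa e, div_le_iff₀ hγpos]
    linarith

end ChoquetAux

end ChoquetTailSection


/-- **Proposition 2.4.** Every closed face `F` of a Choquet simplex `X` is relatively
exposed: for `x₀ ∈ X \ F` there is a continuous affine function `f : X → [0, ∞)` with
`f = 0` on `F` and `f(x₀) > 0`. -/
theorem closed_face_relatively_exposed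
    {E : Type*} [AddCommGroup E] [Module ℝ E] [TopologicalSpace E]
    [IsTopologicalAddGroup E] [ContinuousSMul ℝ E] [LocallyConvexSpace ℝ E] [T2Space E]
    (X : Set E) (hX : IsChoquetSimplex X)
    (F : Set E) (hFX : F ⊆ X) (hFclosed : IsClosed F) (hFconvex : Convex ℝ F)
    (hFface : ∀ y ∈ X, ∀ z ∈ X, ((1/2 : ℝ) • y + (1/2 : ℝ) • z) ∈ F → y ∈ F ∧ z ∈ F)
    (x₀ : E) (hx₀X : x₀ ∈ X) (hx₀F : x₀ ∉ F) :
    ∃ f : E → ℝ, ContinuousOn f X ∧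
      (∀ y ∈ X, ∀ z ∈ X, ∀ t : ℝ, 0 ≤ t → t ≤ 1 →
        f (t • y + (1 - t) • z) = t * f y + (1 - t) * f z) ∧
      (∀ x ∈ X, 0 ≤ f x) ∧ (∀ x ∈ F, f x = 0) ∧ 0 < f x₀ := by
  classical
  letI : MeasurableSpace ↥X := baireSigma ↥X
  open ChoquetAux in
  rcases Set.eq_empty_or_nonempty F with hFemp | hFne
  · -- trivial case: the face is empty
    refine ⟨fun _ => 1, continuousOn_const, ?_, ?_, ?_, one_pos⟩
    · intro y _ z _ t _ _
      ring
    · intro x _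
      norm_num
    · intro x hx
      rw [hFemp] at hx
      exact absurd hx (Set.notMem_empty x)
  obtain ⟨hXc, hXconv, huniq⟩ := hX
  have hXne : X.Nonempty := ⟨x₀, hx₀X⟩
  have huniq' : ∀ x ∈ X, ∃! μ : MeasureTheory.Measure ↥X, ChoquetAux.RepM X x μ :=
    fun x hx => huniq x hx
  have hex : ∀ x ∈ X, ∃ μ : MeasureTheory.Measure ↥X, ChoquetAux.RepM X x μ :=
    fun x hx => (huniq' x hx).exists
  have huni : ∀ x ∈ X, ∀ μ₁ μ₂ : MeasureTheory.Measure ↥X,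
      ChoquetAux.RepM X x μ₁ → ChoquetAux.RepM X x μ₂ → μ₁ = μ₂ :=
    fun x hx μ₁ μ₂ h₁ h₂ => (huniq' x hx).unique h₁ h₂
  -- separate x₀ from F
  have hFcomp : IsCompact F := IsCompact.of_isClosed_subset hXc hFclosed hFX
  obtain ⟨ℓ₀, u₀, hℓ₀F, hℓ₀x⟩ :=
    geometric_hahn_banach_closed_point hFconvex hFclosed hx₀F
  set b1 : (E →L[ℝ] ℝ) × ℝ := (ℓ₀, -u₀) with hb1
  have hb1F : ∀ e ∈ F, ChoquetAux.aff b1 e ≤ 0 := by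
    intro e he
    have := hℓ₀F e he
    simp only [ChoquetAux.aff, hb1]
    linarith
  have hb1x₀ : 0 < ChoquetAux.aff b1 x₀ := by
    simp only [ChoquetAux.aff, hb1]
    linarith
  -- a uniform bound for b1 on X
  obtain ⟨eM, heMX, heM⟩ := hXc.exists_isMaxOn hXne
    (ChoquetAux.aff_continuous b1).continuousOn
  set M : ℝ := max (ChoquetAux.aff b1 eM) 0 with hM
  have hMnonneg : 0 ≤ M := le_max_right _ _
  have hMb : ∀ e ∈ X, ChoquetAux.aff b1 e ≤ M := fun e he =>
    le_trans (heM he) (le_max_left _ _)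
  set cM : (E →L[ℝ] ℝ) × ℝ := (0, M) with hcM
  have haffcM : ∀ e : E, ChoquetAux.aff cM e = M := by
    intro e; simp [ChoquetAux.aff, hcM]
  set z0 : (E →L[ℝ] ℝ) × ℝ := (0, 0) with hz0
  have haffz0 : ∀ e : E, ChoquetAux.aff z0 e = 0 := by
    intro e; simp [ChoquetAux.aff, hz0]
  -- the invariant
  set δ : ℕ → ℝ := fun n => (1/2 : ℝ)^n with hδdef
  have hδpos : ∀ n, 0 < δ n := fun n => pow_pos (by norm_num) n
  have hδsucc : ∀ n, δ (n+1) = δ n / 2 := by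
    intro n
    show (1/2:ℝ)^(n+1) = (1/2:ℝ)^n / 2
    rw [pow_succ]
    ring
  set Inv : ℕ → ((E →L[ℝ] ℝ) × ℝ) → Prop := fun n p =>
    (∀ e ∈ X, ChoquetAux.aff b1 e ≤ ChoquetAux.aff p e + δ n) ∧
    (∀ e ∈ X, 0 ≤ ChoquetAux.aff p e + δ n) ∧
    (∀ e ∈ X, ChoquetAux.aff p e ≤ M + δ n) ∧
    (∀ e ∈ F, ChoquetAux.aff p e ≤ δ n) with hInv
  -- base step
  have base : ∃ p, Inv 0 p := by
    obtain ⟨a, haX, haU, haF⟩ := ChoquetAux.approx_sep hXc hXconv hXne hFX hFclosed hFconvex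
      hFne hFface hex huni b1 z0 z0 cM cM
      (fun e he => ⟨hb1F e he, le_of_eq (haffz0 e), le_of_eq (haffz0 e)⟩)
      (fun e he => ⟨⟨by rw [haffcM]; exact hMb e he, by rw [haffcM]; exact hMb e he⟩,
        ⟨by rw [haffcM, haffz0]; exact hMnonneg, by rw [haffcM, haffz0]; exact hMnonneg⟩,
        ⟨by rw [haffcM, haffz0]; exact hMnonneg, by rw [haffcM, haffz0]; exact hMnonneg⟩⟩)
      (hδpos 0)
    refine ⟨a, ?_, ?_, ?_, ?_⟩
    · intro e he
      have := (haX e he).1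
      linarith
    · intro e he
      have := (haX e he).2.1
      rw [haffz0] at this
      linarith
    · intro e he
      have := (haU e he).1
      rw [haffcM] at this
      linarith
    · exact haF
  -- inductive step
  have step : ∀ n (p : (E →L[ℝ] ℝ) × ℝ), Inv n p →
      ∃ q, Inv (n+1) q ∧ ∀ e ∈ X, |ChoquetAux.aff q e - ChoquetAux.aff p e| ≤ 3 * δ n := by
    intro n p hp
    obtain ⟨hp1, hp2, hp3, hp4⟩ := hp
    set plo : (E →L[ℝ] ℝ) × ℝ := (p.1, p.2 - 2 * δ n) with hplo
    set phi : (E →L[ℝ] ℝ) × ℝ := (p.1, p.2 + 2 * δ n) with hphi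
    have haffplo : ∀ e : E, ChoquetAux.aff plo e = ChoquetAux.aff p e - 2 * δ n := by
      intro e; simp [ChoquetAux.aff, hplo]; ring
    have haffphi : ∀ e : E, ChoquetAux.aff phi e = ChoquetAux.aff p e + 2 * δ n := by
      intro e; simp [ChoquetAux.aff, hphi]; ring
    obtain ⟨a, haX, haU, haF⟩ := ChoquetAux.approx_sep hXc hXconv hXne hFX hFclosed hFconvex
      hFne hFface hex huni b1 z0 plo cM phi
      (fun e he => ⟨hb1F e he, le_of_eq (haffz0 e), by
        rw [haffplo]
        have := hp4 e he
        have := hδpos n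
        linarith⟩)
      (fun e he => by
        have h1 := hp1 e he
        have h2 := hp2 e he
        have h3 := hp3 e he
        have h5 := hδpos n
        refine ⟨⟨?_, ?_⟩, ⟨?_, ?_⟩, ⟨?_, ?_⟩⟩
        · rw [haffcM]; exact hMb e he
        · rw [haffphi]; linarith
        · rw [haffz0, haffcM]; exact hMnonneg
        · rw [haffz0, haffphi]; linarith
        · rw [haffplo, haffcM]; linarith
        · rw [haffplo, haffphi]; linarith)
      (hδpos (n+1))
    refine ⟨a, ⟨?_, ?_, ?_, ?_⟩, ?_⟩
    · intro e he
      have := (haX e he).1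
      linarith
    · intro e he
      have := (haX e he).2.1
      rw [haffz0] at this
      linarith
    · intro e he
      have := (haU e he).1
      rw [haffcM] at this
      linarith
    · exact haF
    · intro e he
      have hlo := (haX e he).2.2
      have hhi := (haU e he).2
      rw [haffplo] at hlo
      rw [haffphi] at hhi
      have h5 := hδpos n
      have h6 := hδsucc n
      rw [abs_le]
      constructor <;> linarith
  -- build the sequence
  obtain ⟨p0, hp0⟩ := base
  choose st hst1 hst2 using step
  let seq : ∀ n : ℕ, {p : (E →L[ℝ] ℝ) × ℝ // Inv n p} := fun n =>
    Nat.rec ⟨p0, hp0⟩ (fun k ih => ⟨st k ih.1 ih.2, hst1 k ih.1 ih.2⟩) n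
  have hseq_succ : ∀ n, (seq (n+1)).1 = st n (seq n).1 (seq n).2 := fun n => rfl
  set A : ℕ → E → ℝ := fun n e => ChoquetAux.aff (seq n).1 e with hA
  have hclose : ∀ n, ∀ e ∈ X, |A (n+1) e - A n e| ≤ 3 * δ n := by
    intro n e he
    exact hst2 n (seq n).1 (seq n).2 e he
  have hInvn : ∀ n, (∀ e ∈ X, ChoquetAux.aff b1 e ≤ A n e + δ n) ∧
      (∀ e ∈ X, 0 ≤ A n e + δ n) ∧ (∀ e ∈ X, A n e ≤ M + δ n) ∧
      (∀ e ∈ F, A n e ≤ δ n) := fun n => (seq n).2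
  -- convergence
  have hdist : ∀ e ∈ X, ∀ n, dist (A n e) (A (n+1) e) ≤ 3 * (1/2 : ℝ)^n := by
    intro e he n
    rw [Real.dist_eq, abs_sub_comm]
    exact hclose n e he
  have hcauchy : ∀ e ∈ X, CauchySeq (fun n => A n e) := by
    intro e he
    exact cauchySeq_of_le_geometric (1/2 : ℝ) 3 (by norm_num) (hdist e he)
  set f : E → ℝ := fun e => Filter.limUnder Filter.atTop (fun n => A n e) with hf
  have htend : ∀ e ∈ X, Filter.Tendsto (fun n => A n e) Filter.atTop (nhds (f e)) := by
    intro e he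
    exact (hcauchy e he).tendsto_limUnder
  have hδtend : Filter.Tendsto δ Filter.atTop (nhds 0) := by
    rw [hδdef]
    exact tendsto_pow_atTop_nhds_zero_of_lt_one (by norm_num) (by norm_num)
  have hdistf : ∀ e ∈ X, ∀ n, dist (A n e) (f e) ≤ 3 * (1/2:ℝ)^n / (1 - 1/2) :=
    fun e he n =>
      dist_le_of_le_geometric_of_tendsto (1/2 : ℝ) 3 (by norm_num) (hdist e he)
        (htend e he) n
  -- uniform convergence gives continuity
  have hAcont : ∀ n, ContinuousOn (fun e => A n e) X := by
    intro n
    exact (ChoquetAux.aff_continuous (seq n).1).continuousOn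
  have hunif : TendstoUniformlyOn (fun n e => A n e) f Filter.atTop X := by
    rw [Metric.tendstoUniformlyOn_iff]
    intro ε hε
    have h2 : Filter.Tendsto (fun n : ℕ => 3 * (1/2:ℝ)^n / (1 - 1/2)) Filter.atTop (nhds 0) := by
      have h3 : Filter.Tendsto (fun n : ℕ => (1/2:ℝ)^n) Filter.atTop (nhds 0) :=
        tendsto_pow_atTop_nhds_zero_of_lt_one (by norm_num) (by norm_num)
      have h4 := (h3.const_mul (3 : ℝ)).div_const (1 - 1/2)
      simpa using h4
    filter_upwards [h2.eventually (gt_mem_nhds hε)] with n hn e he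
    rw [dist_comm]
    exact lt_of_le_of_lt (hdistf e he n) hn
  have hfcont : ContinuousOn f X :=
    hunif.continuousOn (Filter.Eventually.of_forall hAcont).frequently
  -- properties of the limit
  have hflb1 : ∀ e ∈ X, ChoquetAux.aff b1 e ≤ f e := by
    intro e he
    have htt : Filter.Tendsto (fun n => A n e + δ n) Filter.atTop (nhds (f e + 0)) :=
      (htend e he).add hδtend
    rw [add_zero] at htt
    exact ge_of_tendsto htt (Filter.Eventually.of_forall fun n => (hInvn n).1 e he)
  have hf0 : ∀ e ∈ X, 0 ≤ f e := by
    intro e he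
    have htt : Filter.Tendsto (fun n => A n e + δ n) Filter.atTop (nhds (f e + 0)) :=
      (htend e he).add hδtend
    rw [add_zero] at htt
    exact ge_of_tendsto htt (Filter.Eventually.of_forall fun n => (hInvn n).2.1 e he)
  have hfF : ∀ e ∈ F, f e ≤ 0 := by
    intro e he
    exact le_of_tendsto_of_tendsto (htend e (hFX he)) hδtend
      (Filter.Eventually.of_forall fun n => (hInvn n).2.2.2 e he)
  refine ⟨f, hfcont, ?_, hf0, ?_, ?_⟩
  · intro y hy z hz t ht0 ht1
    have hmem : t • y + (1 - t) • z ∈ X := hXconv hy hz ht0 (by linarith) (by ring)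
    have h1 : Filter.Tendsto (fun n => A n (t • y + (1 - t) • z)) Filter.atTop
        (nhds (f (t • y + (1 - t) • z))) := htend _ hmem
    have h2 : Filter.Tendsto (fun n => t * A n y + (1 - t) * A n z) Filter.atTop
        (nhds (t * f y + (1 - t) * f z)) :=
      ((htend y hy).const_mul t).add ((htend z hz).const_mul (1 - t))
    have h3 : (fun n => A n (t • y + (1 - t) • z)) = fun n => t * A n y + (1 - t) * A n z := by
      funext n
      exact ChoquetAux.aff_combo (seq n).1 y z t
    rw [h3] at h1
    exact tendsto_nhds_unique h1 h2
  · intro x hx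
    exact le_antisymm (hfF x hx) (hf0 x (hFX hx))
  · exact lt_of_lt_of_le hb1x₀ (hflb1 x₀ hx₀X)
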